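/- Let $r > 0$, $\kappa < 0$, $r_j > 0$ with $r_j \le r$ and $3r - \kappa - r_j > 0$. For reals $x_j$ and $x_j^*$, set $\xi_j = \lceil x_j\rfloor^{r/r_j} - \lceil x_j^*\rfloor^{r/r_j}$ (signed powers, with $r/r_j \ge 1$). Then $\left|\int_{x_j^*}^{x_j} \left|\lceil s\rfloor^{r/r_j} - \lceil x_j^*\rfloor^{r/r_j}\right|^{(3r-\kappa-r_j)/r} ds\right| \le 2^{1 - r_j/r}\, |\xi_j|^{(3r-\kappa)/r}$. -/

import Mathlib

noncomputable def spow (a b : ℝ) : ℝ := Real.sign a * |a| ^ b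

lemma spow_of_pos {s : ℝ} (h : 0 < s) (p : ℝ) : spow s p = s ^ p := by
  simp [spow, Real.sign_of_pos h, abs_of_pos h]

lemma spow_zero_left (p : ℝ) : spow 0 p = 0 := by simp [spow, Real.sign_zero]

lemma spow_neg_left (s p : ℝ) : spow (-s) p = - spow s p := by
  rcases lt_trichotomy s 0 with h | rfl | h
  · simp [spow, Real.sign_of_neg h, Real.sign_of_pos (neg_pos.2 h), abs_of_neg h]
  · simp [spow, Real.sign_zero]
  · simp [spow, Real.sign_of_pos h, Real.sign_of_neg (neg_neg_iff_pos.2 h), abs_of_pos h]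

lemma spow_of_nonneg {s : ℝ} (h : 0 ≤ s) {p : ℝ} (hp : 0 < p) : spow s p = s ^ p := by
  rcases h.eq_or_lt with rfl | h
  · simp [spow_zero_left, Real.zero_rpow hp.ne']
  · exact spow_of_pos h p

lemma spow_mono {p : ℝ} (hp : 0 < p) : Monotone fun s : ℝ => spow s p := by
  intro a b hab
  rcases le_total 0 a with ha | ha
  · simp only [spow_of_nonneg ha hp, spow_of_nonneg (ha.trans hab) hp]
    exact Real.rpow_le_rpow ha hab hp.le
  rcases le_total b 0 with hb | hb
  · have h1 : spow (-b) p ≤ spow (-a) p := by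
      simp only [spow_of_nonneg (neg_nonneg.2 hb) hp, spow_of_nonneg (neg_nonneg.2 ha) hp]
      exact Real.rpow_le_rpow (neg_nonneg.2 hb) (by linarith) hp.le
    simp only [spow_neg_left] at h1
    simpa using neg_le_neg h1
  · have h1 : spow a p ≤ 0 := by
      have := spow_neg_left a p
      have h2 : 0 ≤ spow (-a) p := by
        rw [spow_of_nonneg (neg_nonneg.2 ha) hp]; exact Real.rpow_nonneg (neg_nonneg.2 ha) p
      simp only [spow_neg_left] at h2; linarith
    have h2 : 0 ≤ spow b p := by rw [spow_of_nonneg hb hp]; positivity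
    linarith

lemma spow_spow (s a b : ℝ) : spow (spow s a) b = spow s (a * b) := by
  rcases lt_trichotomy s 0 with h | rfl | h
  · have h1 : spow s a = -((-s) ^ a) := by
      have := spow_neg_left s a
      rw [spow_of_pos (by linarith : (0:ℝ) < -s)] at this
      linarith
    have h2 : (0:ℝ) < (-s) ^ a := Real.rpow_pos_of_pos (by linarith) a
    rw [h1, show (-((-s)^a) : ℝ) = -(((-s)^a)) from rfl, spow_neg_left, spow_of_pos h2,
      ← Real.rpow_mul (by linarith : (0:ℝ) ≤ -s)]
    have h3 : spow s (a*b) = -((-s) ^ (a*b)) := by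
      have := spow_neg_left s (a*b)
      rw [spow_of_pos (by linarith : (0:ℝ) < -s)] at this
      linarith
    rw [h3]
  · simp [spow_zero_left]
  · rw [spow_of_pos h, spow_of_pos (Real.rpow_pos_of_pos h a), spow_of_pos h,
      ← Real.rpow_mul h.le]

lemma spow_one (s : ℝ) : spow s 1 = s := by
  rcases lt_trichotomy s 0 with h | rfl | h
  · simp [spow, Real.sign_of_neg h, abs_of_neg h]
  · simp [spow, Real.sign_zero]
  · simp [spow, Real.sign_of_pos h, abs_of_pos h]

lemma add_rpow_le {a b q : ℝ} (ha : 0 ≤ a) (hb : 0 ≤ b) (h0 : 0 ≤ q) (h1 : q ≤ 1) :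
    (a + b) ^ q ≤ a ^ q + b ^ q := by
  have h := NNReal.rpow_add_le_add_rpow a.toNNReal b.toNNReal h0 h1
  have h2 := NNReal.coe_le_coe.2 h
  push_cast at h2
  rwa [Real.coe_toNNReal _ ha, Real.coe_toNNReal _ hb] at h2

lemma rpow_add_rpow_le_mul {a b q : ℝ} (ha : 0 ≤ a) (hb : 0 ≤ b) (h0 : 0 < q) (h1 : q ≤ 1) :
    a ^ q + b ^ q ≤ 2 ^ (1 - q) * (a + b) ^ q := by
  have hp : 1 ≤ 1 / q := one_le_one_div h0 h1
  have h := NNReal.rpow_add_le_mul_rpow_add_rpow (a.toNNReal ^ q) (b.toNNReal ^ q) hp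
  rw [← NNReal.rpow_mul, ← NNReal.rpow_mul, mul_one_div_cancel h0.ne', NNReal.rpow_one,
    NNReal.rpow_one] at h
  have h2 := NNReal.rpow_le_rpow h h0.le
  rw [← NNReal.rpow_mul, one_div_mul_cancel h0.ne', NNReal.rpow_one, NNReal.mul_rpow,
    ← NNReal.rpow_mul] at h2
  have h3 := NNReal.coe_le_coe.2 h2
  push_cast at h3
  rw [Real.coe_toNNReal _ ha, Real.coe_toNNReal _ hb] at h3
  calc a ^ q + b ^ q ≤ 2 ^ ((1/q - 1) * q) * (a + b) ^ q := h3
    _ = 2 ^ (1 - q) * (a + b) ^ q := by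
        rw [sub_mul, one_div_mul_cancel h0.ne', one_mul]

lemma spow_sub_spow_le_aux {u v q : ℝ} (h : v ≤ u) (h0 : 0 < q) (h1 : q ≤ 1) :
    spow u q - spow v q ≤ 2 ^ (1 - q) * (u - v) ^ q := by
  have h2q : (1:ℝ) ≤ 2 ^ (1 - q) := by
    calc (1:ℝ) = 2 ^ (0:ℝ) := (Real.rpow_zero 2).symm
      _ ≤ 2 ^ (1 - q) := Real.rpow_le_rpow_of_exponent_le one_le_two (by linarith)
  have key : ∀ a b : ℝ, 0 ≤ b → b ≤ a → a ^ q - b ^ q ≤ (a - b) ^ q := by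
    intro a b hb hba
    have h3 : a ^ q ≤ (a - b) ^ q + b ^ q := by
      calc a ^ q = ((a - b) + b) ^ q := by ring_nf
        _ ≤ (a - b) ^ q + b ^ q := add_rpow_le (by linarith) hb h0.le h1
    linarith
  rcases le_total 0 v with hv | hv
  · rw [spow_of_nonneg hv h0, spow_of_nonneg (hv.trans h) h0]
    calc u ^ q - v ^ q ≤ (u - v) ^ q := key u v hv h
      _ = 1 * (u - v) ^ q := (one_mul _).symm
      _ ≤ 2 ^ (1 - q) * (u - v) ^ q :=
        mul_le_mul_of_nonneg_right h2q (Real.rpow_nonneg (by linarith) q)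
  rcases le_total u 0 with hu | hu
  · have e1 : spow u q = -((-u) ^ q) := by
      have := spow_neg_left u q; rw [spow_of_nonneg (neg_nonneg.2 hu) h0] at this; linarith
    have e2 : spow v q = -((-v) ^ q) := by
      have := spow_neg_left v q; rw [spow_of_nonneg (neg_nonneg.2 hv) h0] at this; linarith
    rw [e1, e2]
    have h3 := key (-v) (-u) (neg_nonneg.2 hu) (by linarith)
    calc -((-u) ^ q) - -((-v) ^ q) = (-v) ^ q - (-u) ^ q := by ring
      _ ≤ (-v - -u) ^ q := h3
      _ = (u - v) ^ q := by ring_nf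
      _ = 1 * (u - v) ^ q := (one_mul _).symm
      _ ≤ 2 ^ (1 - q) * (u - v) ^ q :=
        mul_le_mul_of_nonneg_right h2q (Real.rpow_nonneg (by linarith) q)
  · have e2 : spow v q = -((-v) ^ q) := by
      have := spow_neg_left v q; rw [spow_of_nonneg (neg_nonneg.2 hv) h0] at this; linarith
    rw [spow_of_nonneg hu h0, e2]
    have h3 := rpow_add_rpow_le_mul hu (neg_nonneg.2 hv) h0 h1
    calc u ^ q - -((-v) ^ q) = u ^ q + (-v) ^ q := by ring
      _ ≤ 2 ^ (1 - q) * (u + -v) ^ q := h3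
      _ = 2 ^ (1 - q) * (u - v) ^ q := by ring_nf

lemma abs_spow_sub_spow_le {u v q : ℝ} (h0 : 0 < q) (h1 : q ≤ 1) :
    |spow u q - spow v q| ≤ 2 ^ (1 - q) * |u - v| ^ q := by
  rcases le_total v u with h | h
  · rw [abs_of_nonneg (sub_nonneg.2 (spow_mono h0 h)), abs_of_nonneg (sub_nonneg.2 h)]
    exact spow_sub_spow_le_aux h h0 h1
  · rw [abs_sub_comm, abs_sub_comm u v,
      abs_of_nonneg (sub_nonneg.2 (spow_mono h0 h)), abs_of_nonneg (sub_nonneg.2 h)]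
    exact spow_sub_spow_le_aux h h0 h1

theorem stmt_12 (r κ rj : ℝ) (hr : 0 < r) (hκ : κ < 0) (hrj : 0 < rj) (hrjr : rj ≤ r)
    (hpow : 0 < 3 * r - κ - rj) (x c : ℝ)
    (ξ : ℝ) (hξ : ξ = spow x (r / rj) - spow c (r / rj)) :
    |∫ s in c..x, |spow s (r / rj) - spow c (r / rj)| ^ ((3 * r - κ - rj) / r)|
      ≤ 2 ^ (1 - rj / r) * |ξ| ^ ((3 * r - κ) / r) := by
  set p := r / rj with hpdef
  set q := rj / r with hqdef
  set α := (3 * r - κ - rj) / r with hadef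
  have hp : 0 < p := div_pos hr hrj
  have hq : 0 < q := div_pos hrj hr
  have hq1 : q ≤ 1 := (div_le_one hr).2 hrjr
  have hα : 0 < α := div_pos hpow hr
  have hA : ∀ s ∈ Set.uIoc c x, ‖|spow s p - spow c p| ^ α‖ ≤ |ξ| ^ α := by
    intro s hs
    have key : |spow s p - spow c p| ≤ |ξ| := by
      rw [hξ]
      rcases Set.mem_uIoc.1 hs with ⟨h1, h2⟩ | ⟨h1, h2⟩
      · have m1 : spow c p ≤ spow s p := spow_mono hp h1.le
        have m2 : spow s p ≤ spow x p := spow_mono hp h2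
        exact abs_le_abs (by linarith) (by linarith)
      · have m1 : spow x p ≤ spow s p := spow_mono hp h1.le
        have m2 : spow s p ≤ spow c p := spow_mono hp h2
        rw [abs_sub_comm, abs_sub_comm (spow x p)]
        exact abs_le_abs (by linarith) (by linarith)
    rw [Real.norm_eq_abs, abs_of_nonneg (Real.rpow_nonneg (abs_nonneg _) α)]
    exact Real.rpow_le_rpow (abs_nonneg _) key hα.le
  have hB := intervalIntegral.norm_integral_le_of_norm_le_const hA
  rw [Real.norm_eq_abs] at hB
  have hC : |x - c| ≤ 2 ^ (1 - q) * |ξ| ^ q := by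
    have hpq : p * q = 1 := by
      rw [hpdef, hqdef]; field_simp
    have e1 : spow (spow x p) q = x := by rw [spow_spow, hpq, spow_one]
    have e2 : spow (spow c p) q = c := by rw [spow_spow, hpq, spow_one]
    calc |x - c| = |spow (spow x p) q - spow (spow c p) q| := by rw [e1, e2]
      _ ≤ 2 ^ (1 - q) * |spow x p - spow c p| ^ q := abs_spow_sub_spow_le hq hq1
      _ = 2 ^ (1 - q) * |ξ| ^ q := by rw [hξ]
  have hsum : α + q = (3 * r - κ) / r := by
    rw [hadef, hqdef, ← add_div]; ring_nf
  have final : |ξ| ^ α * (2 ^ (1 - q) * |ξ| ^ q) = 2 ^ (1 - q) * |ξ| ^ ((3 * r - κ) / r) := by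
    rw [← hsum, Real.rpow_add' (abs_nonneg ξ) (by rw [hsum]; exact ne_of_gt (div_pos (by linarith) hr))]
    ring
  calc |∫ s in c..x, |spow s p - spow c p| ^ α| ≤ |ξ| ^ α * |x - c| := hB
    _ ≤ |ξ| ^ α * (2 ^ (1 - q) * |ξ| ^ q) :=
      mul_le_mul_of_nonneg_left hC (Real.rpow_nonneg (abs_nonneg _) α)
    _ = 2 ^ (1 - q) * |ξ| ^ ((3 * r - κ) / r) := final
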